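/- The infinite dihedral group D_∞ = ⟨a, b | a², b²⟩ has no finite symmetric generating set S with respect to which κ(g) = 0 for every nontrivial g. Equivalently, there is no finite generating set of D_∞ that is invariant under conjugation by all of its own elements. -/

import Mathlib

open Filter Topology

section WL
variable {G : Type*} [Group G]

/-- Word length of `g` with respect to a generating set `S`. -/
noncomputable def wl (S : Set G) (g : G) : ℕ :=
  sInf {n | ∃ l : List G, (∀ x ∈ l, x ∈ S) ∧ l.length = n ∧ l.prod = g}

/-- Average word length of conjugates of `g` by elements of `S`. -/
noncomputable def Av (S : Finset G) (g : G) : ℝ :=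
  (∑ a ∈ S, (wl (S : Set G) (a⁻¹ * g * a) : ℝ)) / S.card

/-- Medium-scale Ricci curvature `κ(g) = (|g| - Av(g))/|g|`. -/
noncomputable def curv (S : Finset G) (g : G) : ℝ :=
  ((wl (S : Set G) g : ℝ) - Av S g) / (wl (S : Set G) g)

end WL

namespace Stmt15

/-- Relators of the infinite dihedral group `⟨a, b ∣ a², b²⟩`. -/
def relsD : Set (FreeGroup (Fin 2)) :=
  { (FreeGroup.of 0) ^ 2, (FreeGroup.of 1) ^ 2 }

/-- The infinite dihedral group `D_∞ = ℤ/2 ∗ ℤ/2`. -/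
abbrev Dinf : Type := PresentedGroup relsD

section Aux

variable {G : Type*} [Group G]

/-- For a symmetric generating set, every element of the closure is a product of a list. -/
lemma exists_word {S : Set G} (hsym : ∀ a ∈ S, a⁻¹ ∈ S) {g : G}
    (hg : g ∈ Subgroup.closure S) :
    ∃ l : List G, (∀ x ∈ l, x ∈ S) ∧ l.prod = g := by
  have h : g ∈ (Subgroup.closure S).toSubmonoid := hg
  rw [Subgroup.closure_toSubmonoid] at h
  obtain ⟨l, hl, hp⟩ := Submonoid.exists_list_of_mem_closure h
  refine ⟨l, fun x hx => ?_, hp⟩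
  rcases hl x hx with h | h
  · exact h
  · simpa using hsym _ h

lemma wl_pos {S : Set G} (hsym : ∀ a ∈ S, a⁻¹ ∈ S)
    (hS : Subgroup.closure S = ⊤) {g : G} (hg : g ≠ 1) : 0 < wl S g := by
  rcases Nat.eq_zero_or_pos (wl S g) with h0 | h
  · exfalso
    obtain ⟨l, hl, hp⟩ := exists_word hsym (hS ▸ Subgroup.mem_top g)
    have hne : {n | ∃ l : List G, (∀ x ∈ l, x ∈ S) ∧ l.length = n ∧ l.prod = g}.Nonempty :=
      ⟨l.length, l, hl, rfl, hp⟩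
    have := Nat.sInf_mem hne
    rw [show sInf _ = wl S g from rfl, h0] at this
    obtain ⟨l', _, hlen, hprod⟩ := this
    rw [List.length_eq_zero_iff] at hlen
    subst hlen
    simp at hprod
    exact hg hprod.symm
  · exact h

lemma wl_le_one {S : Set G} {g : G} (hg : g ∈ S) : wl S g ≤ 1 :=
  Nat.sInf_le ⟨[g], by simp [hg]⟩

lemma wl_eq_one {S : Set G} (hsym : ∀ a ∈ S, a⁻¹ ∈ S)
    (hS : Subgroup.closure S = ⊤) {g : G} (hg : g ∈ S) (hg1 : g ≠ 1) : wl S g = 1 :=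
  le_antisymm (wl_le_one hg) (wl_pos hsym hS hg1)

lemma mem_of_wl_eq_one {S : Set G} (hsym : ∀ a ∈ S, a⁻¹ ∈ S)
    (hS : Subgroup.closure S = ⊤) {g : G} (h : wl S g = 1) : g ∈ S := by
  obtain ⟨l, hl, hp⟩ := exists_word hsym (hS ▸ Subgroup.mem_top g)
  have hne : {n | ∃ l : List G, (∀ x ∈ l, x ∈ S) ∧ l.length = n ∧ l.prod = g}.Nonempty :=
    ⟨l.length, l, hl, rfl, hp⟩
  have := Nat.sInf_mem hne
  rw [show sInf _ = wl S g from rfl, h] at this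
  obtain ⟨l', hl', hlen, hprod⟩ := this
  rcases l' with _ | ⟨x, l''⟩
  · simp at hlen
  · rcases l'' with _ | _
    · simp at hprod
      subst hprod
      exact hl' x (by simp)
    · simp at hlen

/-- Conjugation by a product of generators stays in a conjugation-closed set. -/
lemma conj_list_mem {T : Set G} (hT : ∀ s ∈ T, ∀ t ∈ T, s⁻¹ * t * s ∈ T)
    (l : List G) (hl : ∀ x ∈ l, x ∈ T) {t : G} (ht : t ∈ T) :
    (l.prod)⁻¹ * t * l.prod ∈ T := by
  induction l generalizing t with
  | nil => simpa using ht
  | cons s l ih =>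
    have hs : s ∈ T := hl s (by simp)
    have hl' : ∀ x ∈ l, x ∈ T := fun x hx => hl x (by simp [hx])
    have h1 : s⁻¹ * t * s ∈ T := hT s hs t ht
    have := ih hl' h1
    rw [List.prod_cons]
    convert this using 1
    group

end Aux

open DihedralGroup in
theorem stmt15 :
    ¬ ∃ S : Finset Dinf,
        Subgroup.closure (S : Set Dinf) = ⊤ ∧
        (∀ a ∈ S, a⁻¹ ∈ S) ∧
        (1 : Dinf) ∉ S ∧
        (∀ g : Dinf, g ≠ 1 → curv S g = 0) := by
  rintro ⟨S, hgen, hsym, hone, hcurv⟩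
  classical
  -- the homomorphism to the concrete infinite dihedral group
  have hrel : ∀ r ∈ relsD, FreeGroup.lift (fun i : Fin 2 => if i = 0 then (sr 0 : DihedralGroup 0) else sr 1) r = 1 := by
    intro r hr
    rcases hr with h | h <;> subst h <;> simp [sq, sr_mul_self, map_mul] <;> rfl
  set φ : Dinf →* DihedralGroup 0 := PresentedGroup.toGroup hrel with hφ
  have hφ0 : φ (PresentedGroup.of 0) = sr 0 := by
    simp [hφ, PresentedGroup.toGroup.of]
  have hφ1 : φ (PresentedGroup.of 1) = sr 1 := by
    simp [hφ, PresentedGroup.toGroup.of]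
  -- Step 1: each element of S is nontrivial and has word length 1
  have hSnot1 : ∀ s ∈ S, (s : Dinf) ≠ 1 := fun s hs h => hone (h ▸ hs)
  have hcard : (0 : ℝ) < S.card := by
    rcases S.eq_empty_or_nonempty with rfl | h
    · exfalso
      rw [Finset.coe_empty, Subgroup.closure_empty] at hgen
      have : (PresentedGroup.of 0 : Dinf) = 1 := by
        have : (PresentedGroup.of 0 : Dinf) ∈ (⊥ : Subgroup Dinf) := hgen ▸ Subgroup.mem_top _
        simpa using this
      apply_fun φ at this
      rw [hφ0] at this
      simp [one_def, -r_zero] at this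
    · exact_mod_cast Finset.card_pos.2 h
  -- Step 2: S is closed under conjugation by its own elements
  have hconj : ∀ s ∈ S, ∀ t ∈ S, s⁻¹ * t * s ∈ S := by
    intro s hs t ht
    have ht1 : wl (S : Set Dinf) t = 1 := wl_eq_one hsym hgen ht (hSnot1 t ht)
    have hc := hcurv t (hSnot1 t ht)
    rw [curv, ht1] at hc
    have hAv : Av S t = 1 := by
      field_simp at hc
      push_cast at hc
      linarith
    rw [Av, div_eq_one_iff_eq (ne_of_gt hcard)] at hAv
    have hsum : (∑ a ∈ S, (wl (S : Set Dinf) (a⁻¹ * t * a) : ℝ)) = S.card := hAv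
    have hsumnat : (∑ a ∈ S, wl (S : Set Dinf) (a⁻¹ * t * a)) = S.card := by
      exact_mod_cast (by push_cast at hsum ⊢; linarith : ((∑ a ∈ S, wl (S : Set Dinf) (a⁻¹ * t * a) : ℕ) : ℝ) = (S.card : ℕ))
    have hge : ∀ a ∈ S, 1 ≤ wl (S : Set Dinf) (a⁻¹ * t * a) := by
      intro a _
      apply wl_pos hsym hgen
      intro h
      apply hSnot1 t ht
      have : a * (a⁻¹ * t * a) * a⁻¹ = a * 1 * a⁻¹ := by rw [h]
      group at this
      simpa using this
    have heach : ∀ a ∈ S, 1 = wl (S : Set Dinf) (a⁻¹ * t * a) := by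
      have := (Finset.sum_eq_sum_iff_of_le hge).1 (by rw [hsumnat]; simp)
      exact this
    exact mem_of_wl_eq_one hsym hgen (heach s hs).symm
  -- Step 3: transfer to DihedralGroup 0
  set T : Set (DihedralGroup 0) := φ '' (S : Set Dinf) with hT
  have hTfin : T.Finite := (S.finite_toSet).image φ
  have hTconj : ∀ s ∈ T, ∀ t ∈ T, s⁻¹ * t * s ∈ T := by
    rintro _ ⟨s, hs, rfl⟩ _ ⟨t, ht, rfl⟩
    exact ⟨s⁻¹ * t * s, hconj s hs t ht, by simp [map_mul, map_inv]⟩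
  have hTsym : ∀ a ∈ T, a⁻¹ ∈ T := by
    rintro _ ⟨s, hs, rfl⟩
    exact ⟨s⁻¹, hsym s hs, by simp⟩
  have hTclosure : Subgroup.closure T = φ.range := by
    rw [hT, ← MonoidHom.map_closure, hgen, ← MonoidHom.range_eq_map]
  -- range φ is everything relevant: contains sr 0, sr 1, r j for all j
  have hsr0 : sr 0 ∈ φ.range := ⟨PresentedGroup.of 0, hφ0⟩
  have hsr1 : sr 1 ∈ φ.range := ⟨PresentedGroup.of 1, hφ1⟩
  have hr1 : (r 1 : DihedralGroup 0) ∈ φ.range := by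
    have := mul_mem hsr0 hsr1
    simpa [sr_mul_sr] using this
  have hrj : ∀ j : ℤ, (r (j : ZMod 0) : DihedralGroup 0) ∈ φ.range := by
    intro j
    have hpow : ∀ k : ℕ, (r 1 : DihedralGroup 0) ^ k = r (k : ZMod 0) := fun k => by
      simpa using r_one_pow (n := 0) k
    rcases j with k | k
    · have := pow_mem hr1 k
      rw [hpow k] at this
      exact this
    · have := inv_mem (pow_mem hr1 (k + 1))
      rw [hpow (k + 1)] at this
      have hinv : (r ((k + 1 : ℕ) : ZMod 0) : DihedralGroup 0)⁻¹ = r (-((k + 1 : ℕ) : ZMod 0)) := by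
        rfl
      rw [hinv] at this
      convert this using 2
      rfl
  -- conjugation by any element of range φ preserves T
  have hconj_all : ∀ g ∈ φ.range, ∀ t ∈ T, g⁻¹ * t * g ∈ T := by
    intro g hg t ht
    rw [← hTclosure] at hg
    obtain ⟨l, hl, hp⟩ := exists_word hTsym hg
    rw [← hp]
    exact conj_list_mem hTconj l hl ht
  -- T contains a reflection
  have hRsub : ∃ i : ZMod 0, sr i ∈ T := by
    by_contra h
    push_neg at h
    set R : Subgroup (DihedralGroup 0) :=
      { carrier := {x | ∃ i, x = r i}
        one_mem' := ⟨0, rfl⟩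
        mul_mem' := by rintro _ _ ⟨i, rfl⟩ ⟨j, rfl⟩; exact ⟨i + j, rfl⟩
        inv_mem' := by rintro _ ⟨i, rfl⟩; exact ⟨-i, rfl⟩ } with hR
    have hTR : T ⊆ R := by
      rintro x hx
      rcases x with i | i
      · exact ⟨i, rfl⟩
      · exact absurd hx (h i)
    have : Subgroup.closure T ≤ R := Subgroup.closure_le R |>.2 hTR
    rw [hTclosure] at this
    obtain ⟨i, hi⟩ := this hsr0
    exact absurd hi (by simp [hR])
  obtain ⟨i, hi⟩ := hRsub
  let c : ℤ → ZMod 0 := fun m => ((m : ℤ) : ZMod 0)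
  -- all conjugates sr (i + 2j) are in T : contradiction with finiteness
  have hmem : ∀ j : ℤ, sr (i + 2 * c j) ∈ T := by
    intro j
    have := hconj_all (r (c j)) (hrj j) (sr i) hi
    have hc : (r (c j) : DihedralGroup 0)⁻¹ * sr i * r (c j) = sr (i + 2 * c j) := by
      have hinv : (r (c j) : DihedralGroup 0)⁻¹ = r (-(c j)) := rfl
      rw [hinv, r_mul_sr, sr_mul_r]
      congr 1
      ring
    rwa [hc] at this
  have hinj : Function.Injective (fun j : ℤ => (sr (i + 2 * c j) : DihedralGroup 0)) := by
    intro a b hab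
    simp only [sr.injEq] at hab
    have h2 : (2 : ZMod 0) * c a = 2 * c b := add_left_cancel hab
    have h2z : (2 : ℤ) * a = 2 * b := h2
    omega
  exact (Set.infinite_of_injective_forall_mem hinj hmem) hTfin

end Stmt15
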